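/- Let A and B be isoclinic skew left braces. Then the commutator subgroups of Λ_{Aᵒᵖ} = (A,·) ⋊_{λᵒᵖ} (A,∘) and Λ_{Bᵒᵖ} = (B,·) ⋊_{λᵒᵖ} (B,∘) are isomorphic as groups. -/

import Mathlib

/-- A skew left brace: a type with a group structure `(A, *)` (the additive group,
written multiplicatively) and a second group structure `(A, ∘)` (given by `circ`),
satisfying `a ∘ (b * c) = (a ∘ b) * a⁻¹ * (a ∘ c)`. -/
class SkewLeftBrace (A : Type*) extends Group A where
  circ : A → A → A
  circ_assoc : ∀ a b c : A, circ (circ a b) c = circ a (circ b c)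
  one_circ : ∀ a : A, circ 1 a = a
  circ_one : ∀ a : A, circ a 1 = a
  cinv : A → A
  cinv_circ : ∀ a : A, circ (cinv a) a = 1
  compat : ∀ a b c : A, circ a (b * c) = circ a b * a⁻¹ * circ a c

namespace SkewLeftBrace

variable {A : Type*} [SkewLeftBrace A]

/-- Type synonym for `A` carrying the multiplicative group `(A, ∘)`. -/
def Circ (A : Type*) := A

def toCirc {A : Type*} : A → Circ A := fun a => a
def ofCirc {A : Type*} : Circ A → A := fun a => a

instance Circ.instGroup : Group (Circ A) where
  mul a b := toCirc (circ (ofCirc a) (ofCirc b))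
  one := toCirc 1
  inv a := toCirc (cinv (ofCirc a))
  mul_assoc a b c := circ_assoc (A := A) a b c
  one_mul a := one_circ (A := A) a
  mul_one a := circ_one (A := A) a
  inv_mul_cancel a := cinv_circ (A := A) a

/-- The lambda map `λ_a(b) = a⁻¹ * (a ∘ b)`. -/
def lam (a b : A) : A := a⁻¹ * circ a b

/-- The opposite lambda map `λᵒᵖ_a(b) = (a ∘ b) * a⁻¹`. -/
def lamOp (a b : A) : A := circ a b * a⁻¹

lemma circ_cinv (a : A) : circ a (cinv a) = 1 := mul_inv_cancel (toCirc a)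

lemma circ_inv (a b : A) : circ a b⁻¹ = a * (circ a b)⁻¹ * a := by
  have h := compat a b b⁻¹
  rw [mul_inv_cancel, circ_one] at h
  have h2 : circ a b * a⁻¹ * circ a b⁻¹ = a := h.symm
  calc circ a b⁻¹ = (circ a b * a⁻¹)⁻¹ * (circ a b * a⁻¹ * circ a b⁻¹) := by group
    _ = a * (circ a b)⁻¹ * a := by rw [h2]; group

/-- `λ_a` as an automorphism of `(A, *)`. -/
def lamEquiv (a : A) : A ≃* A where
  toFun := lam a
  invFun b := circ (cinv a) (a * b)
  left_inv b := by
    show circ (cinv a) (a * (a⁻¹ * circ a b)) = b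
    rw [mul_inv_cancel_left, ← circ_assoc, cinv_circ, one_circ]
  right_inv b := by
    show a⁻¹ * circ a (circ (cinv a) (a * b)) = b
    rw [← circ_assoc, circ_cinv, one_circ, inv_mul_cancel_left]
  map_mul' b c := by
    show a⁻¹ * circ a (b * c) = (a⁻¹ * circ a b) * (a⁻¹ * circ a c)
    rw [compat]; group

lemma lam_circ (a b c : A) : lam (circ a b) c = lam a (lam b c) := by
  unfold lam
  rw [circ_assoc, compat, circ_inv]
  group

/-- The lambda map as a group homomorphism `(A, ∘) → Aut(A, *)`. -/
def lamHom : Circ A →* MulAut A where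
  toFun a := lamEquiv (ofCirc a)
  map_one' := by
    ext b
    show lam (1 : A) b = b
    simp [lam, one_circ]
  map_mul' a b := by
    ext c
    rw [MulAut.mul_apply]
    exact lam_circ (ofCirc a) (ofCirc b) c

/-- `λᵒᵖ_a` as an automorphism of `(A, *)`. -/
def lamOpEquiv (a : A) : MulAut A := MulAut.conj a * lamEquiv a

lemma lamOpEquiv_apply (a b : A) : lamOpEquiv a b = lamOp a b := by
  show a * (a⁻¹ * circ a b) * a⁻¹ = circ a b * a⁻¹
  group

lemma lamOp_circ (a b c : A) : lamOp (circ a b) c = lamOp a (lamOp b c) := by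
  unfold lamOp
  rw [circ_assoc, compat, circ_inv]
  group

/-- The opposite lambda map as a group homomorphism `(A, ∘) → Aut(A, *)`. -/
def lamOpHom : Circ A →* MulAut A where
  toFun a := lamOpEquiv (ofCirc a)
  map_one' := by
    ext b
    rw [lamOpEquiv_apply]
    show circ (1 : A) b * (1 : A)⁻¹ = b
    rw [one_circ]; group
  map_mul' a b := by
    ext c
    rw [MulAut.mul_apply, lamOpEquiv_apply, lamOpEquiv_apply, lamOpEquiv_apply]
    exact lamOp_circ (ofCirc a) (ofCirc b) c

/-- The group `Λ_{Aᵒᵖ} = (A,·) ⋊_{λᵒᵖ} (A,∘)`. -/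
abbrev LambdaOp (A : Type*) [SkewLeftBrace A] := SemidirectProduct A (Circ A) lamOpHom

/-- The group `Λ_A = (A,·) ⋊_{λ} (A,∘)`. -/
abbrev Lambda (A : Type*) [SkewLeftBrace A] := SemidirectProduct A (Circ A) lamHom

/-- The skew brace commutator `A'`: the subgroup of `(A,·)` generated by all
`a*b*a⁻¹*b⁻¹` and all `a * λ_b(a⁻¹)`. -/
def braceCommutator (A : Type*) [SkewLeftBrace A] : Subgroup A :=
  Subgroup.closure
    {x : A | (∃ a b : A, x = a * b * a⁻¹ * b⁻¹) ∨ (∃ a b : A, x = a * lam b a⁻¹)}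

instance braceCommutator_normal : (braceCommutator A).Normal := by
  constructor
  intro x hx g
  have h1 : g * x * g⁻¹ * x⁻¹ ∈ braceCommutator A :=
    Subgroup.subset_closure (Or.inl ⟨g, x, rfl⟩)
  have h2 : g * x * g⁻¹ = (g * x * g⁻¹ * x⁻¹) * x := by group
  rw [h2]
  exact mul_mem h1 hx

/-- `Fix(λ) = {x : λ_a(x) = x for all a}`. -/
def fixLam (A : Type*) [SkewLeftBrace A] : Set A := {x | ∀ a, lam a x = x}

/-- The annihilator `Ann(A) = Ker(λ) ∩ Z(A,·) ∩ Fix(λ)` as a set. -/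
def annSet (A : Type*) [SkewLeftBrace A] : Set A :=
  {x | (∀ b, lam x b = b) ∧ (∀ a, a * x = x * a) ∧ (∀ a, lam a x = x)}

end SkewLeftBrace

open SkewLeftBrace

/-- The coset relation modulo the annihilator. -/
def AnnRel (A : Type*) [SkewLeftBrace A] (a a' : A) : Prop := a⁻¹ * a' ∈ annSet A

/-- An isoclinism of skew left braces `A` and `B`, encoded by a lift `f : A → B` of a
skew brace isomorphism `ξ₁ : A/Ann(A) → B/Ann(B)` together with a skew brace
isomorphism `g = ξ₂ : A' → B'`, compatible with the maps
`θ(ā,b̄) = a·b·a⁻¹·b⁻¹` and `θ*(ā,b̄) = λ_a(b)·b⁻¹`. -/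
structure SkewBraceIsoclinism (A B : Type*) [SkewLeftBrace A] [SkewLeftBrace B] where
  f : A → B
  g : A → B
  f_mul : ∀ a a' : A, AnnRel B (f (a * a')) (f a * f a')
  f_circ : ∀ a a' : A, AnnRel B (f (circ a a')) (circ (f a) (f a'))
  f_surj : ∀ b : B, ∃ a : A, AnnRel B (f a) b
  f_inj : ∀ a a' : A, AnnRel B (f a) (f a') ↔ AnnRel A a a'
  g_maps : ∀ x ∈ braceCommutator A, g x ∈ braceCommutator B
  g_mul : ∀ x ∈ braceCommutator A, ∀ y ∈ braceCommutator A, g (x * y) = g x * g y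
  g_circ : ∀ x ∈ braceCommutator A, ∀ y ∈ braceCommutator A,
    g (circ x y) = circ (g x) (g y)
  g_bij : Set.BijOn g (braceCommutator A) (braceCommutator B)
  compat_theta : ∀ a b : A, g (a * b * a⁻¹ * b⁻¹) = f a * f b * (f a)⁻¹ * (f b)⁻¹
  compat_thetaStar : ∀ a b : A, g (lam a b * b⁻¹) = lam (f a) (f b) * (f b)⁻¹

open scoped commutatorElement

namespace IsoProof
open SkewLeftBrace

variable {A : Type*} [SkewLeftBrace A]

lemma circ_def (x y : Circ A) : x * y = toCirc (circ (ofCirc x) (ofCirc y)) := rfl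
lemma cinv_def (x : Circ A) : x⁻¹ = toCirc (cinv (ofCirc x)) := rfl
lemma one_def : (1 : Circ A) = toCirc (1 : A) := rfl

lemma lam_mul (a b c : A) : lam a (b * c) = lam a b * lam a c :=
  (lamEquiv a).map_mul b c

lemma lam_one (a : A) : lam a (1 : A) = 1 := by
  have h := (lamEquiv a).map_mul 1 1
  have h2 : lam a (1*1 : A) = lam a 1 * lam a 1 := h
  rw [mul_one] at h2
  have : lam a 1 * 1 = lam a 1 * lam a 1 := by rw [mul_one]; exact h2
  exact (mul_left_cancel this).symm

lemma lam_inv' (a b : A) : lam a b⁻¹ = (lam a b)⁻¹ :=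
  (lamEquiv a).toMonoidHom.map_inv b

lemma circ_eq (a b : A) : circ a b = a * lam a b := (mul_inv_cancel_left a _).symm

lemma lam_cinv_lam (a x : A) : lam (cinv a) (lam a x) = x := by
  rw [← lam_circ, cinv_circ]
  show (1:A)⁻¹ * circ 1 x = x
  rw [one_circ]; group

lemma eq_cinv_of_circ_eq_one {a b : A} (h : circ a b = 1) : b = cinv a := by
  have : toCirc a * toCirc b = 1 := h
  have h2 := inv_eq_of_mul_eq_one_right this
  exact h2.symm

lemma inv_eq_cinv {z : A} (hz : ∀ b, lam z b = b) : z⁻¹ = cinv z := by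
  apply eq_cinv_of_circ_eq_one
  rw [circ_eq, hz, mul_inv_cancel]

lemma cinv_eq_lam_inv (a : A) : cinv a = lam (cinv a) a⁻¹ := by
  have h := cinv_circ a
  rw [circ_eq] at h
  have : lam (cinv a) a = (cinv a)⁻¹ := by
    have := mul_left_cancel (a := cinv a) (b := lam (cinv a) a) (c := (cinv a)⁻¹)
    apply this; rw [h, mul_inv_cancel]
  rw [lam_inv', this, inv_inv]

/-! ### Annihilator lemmas -/

lemma ann_one : (1 : A) ∈ annSet A := by
  refine ⟨fun b => ?_, fun a => by group, fun a => lam_one a⟩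
  show (1:A)⁻¹ * circ 1 b = b
  rw [one_circ]; group

lemma ann_mul {x y : A} (hx : x ∈ annSet A) (hy : y ∈ annSet A) : x * y ∈ annSet A := by
  obtain ⟨hx1, hx2, hx3⟩ := hx
  obtain ⟨hy1, hy2, hy3⟩ := hy
  refine ⟨fun b => ?_, fun a => ?_, fun a => ?_⟩
  · have hxy : x * y = circ x y := by rw [circ_eq, hx1]
    rw [hxy, lam_circ, hy1, hx1]
  · show a * (x*y) = x*y*a
    rw [← mul_assoc, hx2 a, mul_assoc, hy2 a, ← mul_assoc]
  · rw [lam_mul, hx3, hy3]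

lemma ann_inv {x : A} (hx : x ∈ annSet A) : x⁻¹ ∈ annSet A := by
  obtain ⟨hx1, hx2, hx3⟩ := hx
  refine ⟨fun b => ?_, fun a => ?_, fun a => ?_⟩
  · have h := lam_cinv_lam x b
    rw [hx1] at h
    rw [inv_eq_cinv hx1]
    exact h
  · calc a * x⁻¹ = x⁻¹ * (x * a * x⁻¹) := by group
      _ = x⁻¹ * (a * x * x⁻¹) := by rw [hx2]
      _ = x⁻¹ * a := by group
  · rw [lam_inv', hx3]

lemma ann_central {x : A} (hx : x ∈ annSet A) (a : A) : a * x = x * a := hx.2.1 a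

lemma ann_lam_self {x : A} (hx : x ∈ annSet A) (b : A) : lam x b = b := hx.1 b

lemma ann_lam_fix {x : A} (hx : x ∈ annSet A) (a : A) : lam a x = x := hx.2.2 a

lemma ann_mul_eq_circ {x : A} (hx : x ∈ annSet A) (a : A) : a * x = circ a x := by
  rw [circ_eq, ann_lam_fix hx]

lemma ann_lam_absorb {x : A} (hx : x ∈ annSet A) (a : A) :
    lam (a * x) = lam a := by
  have h : a * x = circ a x := ann_mul_eq_circ hx a
  funext b
  show lam (a * x) b = lam a b
  rw [h, lam_circ, ann_lam_self hx]

end IsoProof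
namespace IsoProof
open SkewLeftBrace

variable {A : Type*} [SkewLeftBrace A]

lemma annRel_iff {a a' : A} : AnnRel A a a' ↔ ∃ z ∈ annSet A, a' = a * z := by
  constructor
  · intro h; exact ⟨a⁻¹ * a', h, by group⟩
  · rintro ⟨z, hz, rfl⟩
    show a⁻¹ * (a * z) ∈ annSet A
    rw [inv_mul_cancel_left]; exact hz

lemma annRel_refl (a : A) : AnnRel A a a := by
  rw [annRel_iff]; exact ⟨1, ann_one, by group⟩

lemma annRel_symm {a a' : A} (h : AnnRel A a a') : AnnRel A a' a := by
  rw [annRel_iff] at h ⊢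
  obtain ⟨z, hz, rfl⟩ := h
  exact ⟨z⁻¹, ann_inv hz, by group⟩

lemma annRel_trans {a a' a'' : A} (h : AnnRel A a a') (h' : AnnRel A a' a'') :
    AnnRel A a a'' := by
  rw [annRel_iff] at h h' ⊢
  obtain ⟨z, hz, rfl⟩ := h
  obtain ⟨w, hw, rfl⟩ := h'
  exact ⟨z * w, ann_mul hz hw, by group⟩

lemma annRel_mul {a a' b b' : A} (h : AnnRel A a a') (h' : AnnRel A b b') :
    AnnRel A (a * b) (a' * b') := by
  rw [annRel_iff] at h h' ⊢
  obtain ⟨z, hz, rfl⟩ := h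
  obtain ⟨w, hw, rfl⟩ := h'
  refine ⟨z * w, ann_mul hz hw, ?_⟩
  calc a * z * (b * w) = a * (z * b) * w := by group
    _ = a * (b * z) * w := by rw [ann_central hz]
    _ = a * b * (z * w) := by group

lemma annRel_inv {a a' : A} (h : AnnRel A a a') : AnnRel A a⁻¹ a'⁻¹ := by
  rw [annRel_iff] at h ⊢
  obtain ⟨z, hz, rfl⟩ := h
  refine ⟨z⁻¹, ann_inv hz, ?_⟩
  rw [mul_inv_rev, ann_central (ann_inv hz)]

lemma annRel_circ {a a' b b' : A} (h : AnnRel A a a') (h' : AnnRel A b b') :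
    AnnRel A (circ a b) (circ a' b') := by
  rw [annRel_iff] at h h' ⊢
  obtain ⟨z, hz, rfl⟩ := h
  obtain ⟨w, hw, rfl⟩ := h'
  refine ⟨z * w, ann_mul hz hw, ?_⟩
  calc circ (a * z) (b * w)
      = a * z * lam (a * z) (b * w) := circ_eq _ _
    _ = a * z * (lam a b * lam a w) := by rw [ann_lam_absorb hz, lam_mul]
    _ = a * z * (lam a b * w) := by rw [ann_lam_fix hw]
    _ = a * (lam a b * z) * w := by rw [ann_central hz (lam a b)]; group
    _ = circ a b * (z * w) := by rw [circ_eq]; group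

lemma annRel_cinv {a a' : A} (h : AnnRel A a a') : AnnRel A (cinv a) (cinv a') := by
  rw [annRel_iff] at h ⊢
  obtain ⟨z, hz, rfl⟩ := h
  refine ⟨z⁻¹, ann_inv hz, ?_⟩
  have h1 : a * z = circ a z := ann_mul_eq_circ hz a
  have h2 : cinv (circ a z) = circ (cinv z) (cinv a) := by
    have := mul_inv_rev (toCirc a) (toCirc z)
    exact this
  have h3 : cinv z = z⁻¹ := (inv_eq_cinv (ann_lam_self hz)).symm
  rw [h1, h2, h3, circ_eq, ann_lam_self (ann_inv hz), ann_central (ann_inv hz)]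

/-- θ is invariant under perturbation by annihilator elements. -/
lemma theta_congr {a a' b b' : A} (h : AnnRel A a a') (h' : AnnRel A b b') :
    a * b * a⁻¹ * b⁻¹ = a' * b' * a'⁻¹ * b'⁻¹ := by
  rw [annRel_iff] at h h'
  obtain ⟨z, hz, rfl⟩ := h
  obtain ⟨w, hw, rfl⟩ := h'
  have hzc := ann_central hz
  have hwc := ann_central hw
  have c1 : ∀ x : A, (a * z) * x * (a * z)⁻¹ = a * x * a⁻¹ := by
    intro x
    rw [mul_inv_rev]
    calc a * z * x * (z⁻¹ * a⁻¹) = a * (z * x * z⁻¹) * a⁻¹ := by group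
      _ = a * (x * z * z⁻¹) * a⁻¹ := by rw [← hzc x]
      _ = a * x * a⁻¹ := by group
  symm
  calc (a * z) * (b * w) * (a * z)⁻¹ * (b * w)⁻¹
      = a * (b * w) * a⁻¹ * (b * w)⁻¹ := by rw [c1 (b * w)]
    _ = a * b * (w * a⁻¹ * w⁻¹) * b⁻¹ := by rw [mul_inv_rev]; group
    _ = a * b * (a⁻¹ * w * w⁻¹) * b⁻¹ := by rw [← hwc a⁻¹]
    _ = a * b * a⁻¹ * b⁻¹ := by group

/-- θ* is invariant under perturbation by annihilator elements. -/
lemma thetaStar_congr {a a' b b' : A} (h : AnnRel A a a') (h' : AnnRel A b b') :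
    lam a b * b⁻¹ = lam a' b' * b'⁻¹ := by
  rw [annRel_iff] at h h'
  obtain ⟨z, hz, rfl⟩ := h
  obtain ⟨w, hw, rfl⟩ := h'
  rw [ann_lam_absorb hz, lam_mul, ann_lam_fix hw, mul_inv_rev,
    mul_assoc, mul_inv_cancel_left]

end IsoProof
namespace IsoProof
open SkewLeftBrace Subgroup

variable {A : Type*} [SkewLeftBrace A]

lemma theta_mem (a b : A) : a * b * a⁻¹ * b⁻¹ ∈ braceCommutator A :=
  Subgroup.subset_closure (Or.inl ⟨a, b, rfl⟩)

lemma gen2_mem (a b : A) : a * lam b a⁻¹ ∈ braceCommutator A :=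
  Subgroup.subset_closure (Or.inr ⟨a, b, rfl⟩)

lemma conj_mem' {x : A} (hx : x ∈ braceCommutator A) (a : A) :
    a * x * a⁻¹ ∈ braceCommutator A :=
  (braceCommutator_normal).conj_mem x hx a

lemma thetaStar_mem (a b : A) : lam a b * b⁻¹ ∈ braceCommutator A := by
  have hgen : b⁻¹ * lam a b ∈ braceCommutator A := by
    have := gen2_mem b⁻¹ a
    rwa [inv_inv] at this
  have : lam a b * b⁻¹ = lam a b * (b⁻¹ * lam a b) * (lam a b)⁻¹ := by group
  rw [this]
  exact conj_mem' hgen _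

lemma lam_mem' {x : A} (hx : x ∈ braceCommutator A) (a : A) :
    lam a x ∈ braceCommutator A := by
  have : lam a x = (lam a x * x⁻¹) * x := by group
  rw [this]
  exact mul_mem (thetaStar_mem a x) hx

lemma lamOp_mem' {x : A} (hx : x ∈ braceCommutator A) (a : A) :
    lamOp a x ∈ braceCommutator A := by
  unfold lamOp
  rw [circ_eq]
  exact conj_mem' (lam_mem' hx a) a

lemma circ_mem' {x y : A} (hx : x ∈ braceCommutator A) (hy : y ∈ braceCommutator A) :
    circ x y ∈ braceCommutator A := by
  rw [circ_eq]
  exact mul_mem hx (lam_mem' hy x)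

lemma cinv_mem' {x : A} (hx : x ∈ braceCommutator A) :
    cinv x ∈ braceCommutator A := by
  rw [cinv_eq_lam_inv]
  exact lam_mem' (inv_mem hx) _

/-! ### The quotient `A ⧸ A'` -/

local notation "π" => QuotientGroup.mk (s := braceCommutator A)

lemma quot_comm (x y : A) :
    (x : A ⧸ braceCommutator A) * y = (y : A ⧸ braceCommutator A) * x := by
  rw [← QuotientGroup.mk_mul, ← QuotientGroup.mk_mul, QuotientGroup.eq]
  have : (x * y)⁻¹ * (y * x) = y⁻¹ * x⁻¹ * y * x := by group
  rw [this]
  have h := theta_mem y⁻¹ x⁻¹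
  rwa [inv_inv, inv_inv] at h

lemma quot_lam (a x : A) :
    ((lam a x : A) : A ⧸ braceCommutator A) = (x : A ⧸ braceCommutator A) := by
  rw [QuotientGroup.eq]
  have h1 : x⁻¹ * lam a x = x⁻¹ * (lam a x * x⁻¹) * (x⁻¹)⁻¹ := by group
  have h2 : x⁻¹ * lam a x ∈ braceCommutator A := by
    rw [h1]; exact conj_mem' (thetaStar_mem a x) x⁻¹
  have h3 : (lam a x)⁻¹ * x = (x⁻¹ * lam a x)⁻¹ := by group
  rw [h3]
  exact inv_mem h2

lemma quot_circ (a b : A) :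
    ((circ a b : A) : A ⧸ braceCommutator A)
      = (a : A ⧸ braceCommutator A) * b := by
  rw [circ_eq, QuotientGroup.mk_mul, quot_lam]

/-- the map `(A,∘) → A⧸A'` is a group hom -/
def circToQuot : Circ A →* A ⧸ braceCommutator A where
  toFun y := ((ofCirc y : A) : A ⧸ braceCommutator A)
  map_one' := rfl
  map_mul' x y := quot_circ (ofCirc x) (ofCirc y)

lemma circCommutator_subset {y : Circ A} (hy : y ∈ commutator (Circ A)) :
    (ofCirc y : A) ∈ braceCommutator A := by
  have hker : commutator (Circ A) ≤ (circToQuot (A := A)).ker := by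
    rw [commutator_def, Subgroup.commutator_le]
    intro u _ v _
    rw [MonoidHom.mem_ker, map_commutatorElement]
    rw [commutatorElement_eq_one_iff_commute]
    exact quot_comm (ofCirc u) (ofCirc v)
  have := hker hy
  rw [MonoidHom.mem_ker] at this
  exact (QuotientGroup.eq_one_iff _).mp this

end IsoProof
namespace IsoProof
open SkewLeftBrace Subgroup

variable {A : Type*} [SkewLeftBrace A]

lemma lamOpHom_apply (h : Circ A) (n : A) :
    (lamOpHom h : MulAut A) n = lamOp (ofCirc h) n := lamOpEquiv_apply _ n

/-- The candidate subgroup `A' ⋊ (A,∘)'` of `Λ_{Aᵒᵖ}`. -/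
def Scomm (A : Type*) [SkewLeftBrace A] : Subgroup (LambdaOp A) where
  carrier := {x | x.left ∈ braceCommutator A ∧ x.right ∈ commutator (Circ A)}
  one_mem' := ⟨one_mem _, one_mem _⟩
  mul_mem' := by
    rintro x y ⟨hx1, hx2⟩ ⟨hy1, hy2⟩
    refine ⟨?_, ?_⟩
    · rw [SemidirectProduct.mul_left, lamOpHom_apply]
      exact mul_mem hx1 (lamOp_mem' hy1 _)
    · rw [SemidirectProduct.mul_right]
      exact mul_mem hx2 hy2
  inv_mem' := by
    rintro x ⟨hx1, hx2⟩
    refine ⟨?_, ?_⟩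
    · rw [SemidirectProduct.inv_left, lamOpHom_apply]
      exact lamOp_mem' (inv_mem hx1) _
    · rw [SemidirectProduct.inv_right]
      exact inv_mem hx2

lemma lamOp_mul_inv_mem (h n : A) : lamOp h n * n⁻¹ ∈ braceCommutator A := by
  have hid : lamOp h n * n⁻¹ = (h * (lam h n * n⁻¹) * h⁻¹) * (h * n * h⁻¹ * n⁻¹) := by
    unfold lamOp; rw [circ_eq]; group
  rw [hid]
  exact mul_mem (conj_mem' (thetaStar_mem h n) h) (theta_mem h n)

lemma quot_lamOp (h n : A) :
    ((lamOp h n : A) : A ⧸ braceCommutator A) = (n : A ⧸ braceCommutator A) := by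
  rw [QuotientGroup.eq]
  have hthis : (lamOp h n)⁻¹ * n = (n⁻¹ * (lamOp h n * n⁻¹) * n)⁻¹ := by group
  rw [hthis]
  apply inv_mem
  have := conj_mem' (lamOp_mul_inv_mem h n) n⁻¹
  rwa [inv_inv] at this

/-- Lambda_op → A⧸A' on the left component is a group hom. -/
def leftQuotHom (A : Type*) [SkewLeftBrace A] :
    LambdaOp A →* A ⧸ braceCommutator A where
  toFun x := (x.left : A ⧸ braceCommutator A)
  map_one' := rfl
  map_mul' x y := by
    show ((x.left * (lamOpHom x.right) y.left : A) : A ⧸ braceCommutator A) = _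
    rw [QuotientGroup.mk_mul, lamOpHom_apply, quot_lamOp]

lemma inl_lamOp_comm (a b : A) :
    (SemidirectProduct.inl (a * lamOp b a⁻¹) : LambdaOp A)
      = ⁅(SemidirectProduct.inl a : LambdaOp A), (SemidirectProduct.inr (toCirc b) : LambdaOp A)⁆ := by
  let b' : Circ A := toCirc b
  rw [commutatorElement_def]
  have h1 : (SemidirectProduct.inr b' : LambdaOp A) * SemidirectProduct.inl a⁻¹
      * SemidirectProduct.inr b'⁻¹ = SemidirectProduct.inl ((lamOpHom b') a⁻¹) :=
    (SemidirectProduct.inl_aut (φ := lamOpHom) b' a⁻¹).symm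
  have h2 : (SemidirectProduct.inl a : LambdaOp A) * SemidirectProduct.inr b'
      * (SemidirectProduct.inl a)⁻¹ * (SemidirectProduct.inr b')⁻¹
      = SemidirectProduct.inl a * (SemidirectProduct.inr b' * SemidirectProduct.inl a⁻¹
        * SemidirectProduct.inr b'⁻¹) := by
    rw [← map_inv, ← map_inv]; group
  rw [h2, h1, ← map_mul, lamOpHom_apply]
  rfl

lemma commutator_lambdaOp_eq : commutator (LambdaOp A) = Scomm A := by
  apply le_antisymm
  · rw [commutator_def, Subgroup.commutator_le]
    intro x _ y _
    constructor
    · have h : leftQuotHom A ⁅x, y⁆ = 1 := by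
        rw [map_commutatorElement, commutatorElement_eq_one_iff_commute]
        show ((x.left : A ⧸ braceCommutator A)) * ↑y.left = ↑y.left * ↑x.left
        exact quot_comm x.left y.left
      exact (QuotientGroup.eq_one_iff _).mp h
    · have : ⁅x, y⁆.right = ⁅x.right, y.right⁆ :=
        map_commutatorElement (SemidirectProduct.rightHom) x y
      rw [this]
      exact commutator_mem_commutator (mem_top _) (mem_top _)
  · rintro x ⟨hx1, hx2⟩
    rw [← SemidirectProduct.inl_left_mul_inr_right x]
    apply mul_mem
    · -- inl of braceCommutator lands in the commutator
      have hle : braceCommutator A ≤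
          Subgroup.comap (SemidirectProduct.inl (φ := lamOpHom)) (commutator (LambdaOp A)) := by
        apply Subgroup.closure_le _ |>.mpr
        rintro t (⟨a, b, rfl⟩ | ⟨a, b, rfl⟩)
        · show (SemidirectProduct.inl (a * b * a⁻¹ * b⁻¹) : LambdaOp A) ∈ commutator (LambdaOp A)
          have : (SemidirectProduct.inl (a * b * a⁻¹ * b⁻¹) : LambdaOp A)
              = ⁅(SemidirectProduct.inl a : LambdaOp A), (SemidirectProduct.inl b : LambdaOp A)⁆ := by
            rw [← map_commutatorElement, commutatorElement_def]
          rw [this]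
          exact commutator_mem_commutator (mem_top _) (mem_top _)
        · show (SemidirectProduct.inl (a * lam b a⁻¹) : LambdaOp A) ∈ commutator (LambdaOp A)
          have hA : a * lam b a⁻¹
              = b⁻¹ * ((a * b * a⁻¹ * b⁻¹)⁻¹ * (a * lamOp b a⁻¹)) * b := by
            unfold lamOp; rw [circ_eq]; group
          rw [hA, map_mul, map_mul, map_mul, map_inv, map_inv]
          have m1 : (SemidirectProduct.inl (a * b * a⁻¹ * b⁻¹) : LambdaOp A)
              ∈ commutator (LambdaOp A) := by
            have : (SemidirectProduct.inl (a * b * a⁻¹ * b⁻¹) : LambdaOp A)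
                = ⁅(SemidirectProduct.inl a : LambdaOp A), (SemidirectProduct.inl b : LambdaOp A)⁆ := by
              rw [← map_commutatorElement, commutatorElement_def]
            rw [this]
            exact commutator_mem_commutator (mem_top _) (mem_top _)
          have m2 : (SemidirectProduct.inl (a * lamOp b a⁻¹) : LambdaOp A)
              ∈ commutator (LambdaOp A) := by
            rw [inl_lamOp_comm a b]
            exact commutator_mem_commutator (mem_top _) (mem_top _)
          have m3 : ((SemidirectProduct.inl (a * b * a⁻¹ * b⁻¹) : LambdaOp A))⁻¹
              * SemidirectProduct.inl (a * lamOp b a⁻¹) ∈ commutator (LambdaOp A) :=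
            mul_mem (inv_mem m1) m2
          have hnorm : (commutator (LambdaOp A)).Normal := inferInstance
          have := hnorm.conj_mem _ m3 ((SemidirectProduct.inl b : LambdaOp A))⁻¹
          simpa [mul_assoc, inv_inv] using this
      exact hle hx1
    · -- inr of commutator (Circ A)
      have hle : commutator (Circ A) ≤
          Subgroup.comap (SemidirectProduct.inr (φ := lamOpHom)) (commutator (LambdaOp A)) := by
        rw [commutator_def (Circ A), Subgroup.commutator_le]
        intro u _ v _
        show SemidirectProduct.inr ⁅u, v⁆ ∈ commutator (LambdaOp A)
        rw [map_commutatorElement]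
        exact commutator_mem_commutator (mem_top _) (mem_top _)
      exact hle hx2

end IsoProof
namespace IsoProof
open SkewLeftBrace Subgroup

variable {A : Type*} [SkewLeftBrace A]

/-- The ∘-commutator of two elements, as an element of `A`. -/
def Qc (a b : A) : A := ofCirc ⁅(toCirc a : Circ A), (toCirc b : Circ A)⁆

lemma Qc_def (a b : A) : Qc a b = circ (circ (circ a b) (cinv a)) (cinv b) := rfl

lemma Qc_mem_circComm (a b : A) :
    (toCirc (Qc a b) : Circ A) ∈ commutator (Circ A) :=
  commutator_mem_commutator (mem_top _) (mem_top _)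

lemma Qc_mem (a b : A) : Qc a b ∈ braceCommutator A :=
  circCommutator_subset (Qc_mem_circComm a b)

/-- U2 : `q = (a∘b)·(b∘a)⁻¹·(θ*(q, b∘a))⁻¹`. -/
lemma Qc_eq (a b : A) :
    Qc a b = circ a b * (circ b a)⁻¹ * (lam (Qc a b) (circ b a) * (circ b a)⁻¹)⁻¹ := by
  have h : circ (Qc a b) (circ b a) = circ a b := by
    show ofCirc ((⁅(toCirc a : Circ A), toCirc b⁆) * (toCirc b * toCirc a)) = _
    rw [commutatorElement_def]
    group
    rfl
  rw [circ_eq (Qc a b)] at h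
  have h2 : Qc a b * lam (Qc a b) (circ b a) = circ a b := h
  calc Qc a b = (Qc a b * lam (Qc a b) (circ b a))
      * (circ b a)⁻¹ * (lam (Qc a b) (circ b a) * (circ b a)⁻¹)⁻¹ := by group
    _ = _ := by rw [h2]

/-- U1 : decomposition of `(a∘b)·(b∘a)⁻¹` into commutator-type factors. -/
lemma U1 (a b : A) :
    circ a b * (circ b a)⁻¹
      = (a * (lam a b * b⁻¹) * a⁻¹) * (a * b * a⁻¹ * b⁻¹)
        * (b * (lam b a * a⁻¹)⁻¹ * b⁻¹) := by
  rw [circ_eq a b, circ_eq b a]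
  group

lemma circ_comm_inv_mem (a b : A) :
    circ a b * (circ b a)⁻¹ ∈ braceCommutator A := by
  rw [U1]
  exact mul_mem (mul_mem (conj_mem' (thetaStar_mem a b) a) (theta_mem a b))
    (conj_mem' (inv_mem (thetaStar_mem b a)) b)

/-- Conjugation identity: `a x a⁻¹ = θ(a,x) · x`. -/
lemma conj_eq_theta (a x : A) : a * x * a⁻¹ = (a * x * a⁻¹ * x⁻¹) * x := by group

/-- Annihilator elements are ∘-central. -/
lemma ann_circ_central {z : A} (hz : z ∈ annSet A) (w : A) :
    circ z w = circ w z := by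
  rw [circ_eq, circ_eq, ann_lam_self hz, ann_lam_fix hz, ann_central hz]

/-- Commutators are unchanged by central perturbations (pure group theory). -/
lemma commutatorElement_mul_central {G : Type*} [Group G] {z : G}
    (hz : ∀ w, z * w = w * z) (u v : G) : ⁅u * z, v⁆ = ⁅u, v⁆ := by
  have hz' : ∀ w, z⁻¹ * w = w * z⁻¹ := fun w => by
    calc z⁻¹ * w = z⁻¹ * (w * z) * z⁻¹ := by group
      _ = z⁻¹ * (z * w) * z⁻¹ := by rw [hz w]
      _ = w * z⁻¹ := by group
  rw [commutatorElement_def, commutatorElement_def, mul_inv_rev]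
  calc u * z * v * (z⁻¹ * u⁻¹) * v⁻¹
      = u * (z * v) * z⁻¹ * u⁻¹ * v⁻¹ := by group
    _ = u * (v * z) * z⁻¹ * u⁻¹ * v⁻¹ := by rw [hz v]
    _ = u * v * u⁻¹ * v⁻¹ := by group

lemma commutatorElement_central_right {G : Type*} [Group G] {z : G}
    (hz : ∀ w, z * w = w * z) (u v : G) : ⁅u, v * z⁆ = ⁅u, v⁆ := by
  have hz' : ∀ w, z⁻¹ * w = w * z⁻¹ := fun w => by
    calc z⁻¹ * w = z⁻¹ * (w * z) * z⁻¹ := by group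
      _ = z⁻¹ * (z * w) * z⁻¹ := by rw [hz w]
      _ = w * z⁻¹ := by group
  rw [commutatorElement_def, commutatorElement_def, mul_inv_rev]
  calc u * (v * z) * u⁻¹ * (z⁻¹ * v⁻¹)
      = u * v * (z * u⁻¹) * z⁻¹ * v⁻¹ := by group
    _ = u * v * (u⁻¹ * z) * z⁻¹ * v⁻¹ := by rw [hz u⁻¹]
    _ = u * v * u⁻¹ * v⁻¹ := by group

/-- `Qc` only depends on the arguments modulo the annihilator. -/
lemma Qc_congr {a a' b b' : A} (h : AnnRel A a a') (h' : AnnRel A b b') :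
    Qc a b = Qc a' b' := by
  rw [annRel_iff] at h h'
  obtain ⟨z, hz, rfl⟩ := h
  obtain ⟨w, hw, rfl⟩ := h'
  have hzc : ∀ x : Circ A, (toCirc z) * x = x * (toCirc z) := by
    intro x
    show circ z (ofCirc x) = circ (ofCirc x) z
    exact ann_circ_central hz _
  have hwc : ∀ x : Circ A, (toCirc w) * x = x * (toCirc w) := by
    intro x
    show circ w (ofCirc x) = circ (ofCirc x) w
    exact ann_circ_central hw _
  have ha : toCirc (a * z) = (toCirc a) * (toCirc z) := by
    show a * z = circ a z
    exact ann_mul_eq_circ hz a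
  have hb : toCirc (b * w) = (toCirc b) * (toCirc w) := by
    show b * w = circ b w
    exact ann_mul_eq_circ hw b
  unfold Qc
  rw [ha, hb, commutatorElement_mul_central hzc, commutatorElement_central_right hwc]

end IsoProof
namespace IsoProof
open SkewLeftBrace Subgroup

variable {A B : Type*} [SkewLeftBrace A] [SkewLeftBrace B]
variable (ι : SkewBraceIsoclinism A B)

lemma g_one : ι.g 1 = 1 := by
  have h := ι.g_mul 1 (one_mem _) 1 (one_mem _)
  rw [mul_one] at h
  have h2 : ι.g 1 * 1 = ι.g 1 * ι.g 1 := by rw [mul_one]; exact h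
  exact (mul_left_cancel h2).symm

lemma g_inv' {x : A} (hx : x ∈ braceCommutator A) : ι.g x⁻¹ = (ι.g x)⁻¹ := by
  have h := ι.g_mul x hx x⁻¹ (inv_mem hx)
  rw [mul_inv_cancel, g_one] at h
  exact (inv_eq_of_mul_eq_one_right h.symm).symm

lemma g_cinv' {x : A} (hx : x ∈ braceCommutator A) : ι.g (cinv x) = cinv (ι.g x) := by
  have h := ι.g_circ x hx (cinv x) (cinv_mem' hx)
  rw [circ_cinv, g_one] at h
  exact eq_cinv_of_circ_eq_one h.symm

lemma f_one : AnnRel B (ι.f 1) 1 := by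
  have h := ι.f_mul 1 1
  rw [mul_one] at h
  rw [annRel_iff] at h ⊢
  obtain ⟨z, hz, hz2⟩ := h
  refine ⟨(ι.f 1)⁻¹, ?_, by group⟩
  have h3 : ι.f 1 = z := mul_left_cancel hz2
  rw [h3]
  exact ann_inv hz

lemma f_inv' (a : A) : AnnRel B (ι.f a⁻¹) (ι.f a)⁻¹ := by
  have h := ι.f_mul a a⁻¹
  rw [mul_inv_cancel] at h
  have h1 : AnnRel B (ι.f a * ι.f a⁻¹) 1 := annRel_trans (annRel_symm h) (f_one ι)
  have h2 := annRel_mul (annRel_refl (ι.f a)⁻¹) h1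
  rw [mul_one] at h2
  have h3 : (ι.f a)⁻¹ * (ι.f a * ι.f a⁻¹) = ι.f a⁻¹ := by group
  rw [h3] at h2
  exact h2

lemma f_cinv' (a : A) : AnnRel B (ι.f (cinv a)) (cinv (ι.f a)) := by
  have h := ι.f_circ a (cinv a)
  rw [circ_cinv] at h
  have h1 : AnnRel B (circ (ι.f a) (ι.f (cinv a))) 1 :=
    annRel_trans (annRel_symm h) (f_one ι)
  have h2 := annRel_circ (annRel_refl (cinv (ι.f a))) h1
  have h3 : circ (cinv (ι.f a)) (circ (ι.f a) (ι.f (cinv a))) = ι.f (cinv a) := by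
    rw [← circ_assoc, cinv_circ, one_circ]
  rw [h3, circ_one] at h2
  exact h2

lemma f_lam (a b : A) : AnnRel B (ι.f (lam a b)) (lam (ι.f a) (ι.f b)) := by
  have h0 : lam a b = a⁻¹ * circ a b := rfl
  rw [h0]
  refine annRel_trans (ι.f_mul a⁻¹ (circ a b)) ?_
  refine annRel_trans (annRel_mul (f_inv' ι a) (ι.f_circ a b)) ?_
  exact annRel_refl _

lemma f_thetaStar (a b : A) :
    AnnRel B (ι.f (lam a b * b⁻¹)) (lam (ι.f a) (ι.f b) * (ι.f b)⁻¹) :=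
  annRel_trans (ι.f_mul (lam a b) b⁻¹)
    (annRel_mul (f_lam ι a b) (f_inv' ι b))

lemma f_Qc (a b : A) : AnnRel B (ι.f (Qc a b)) (Qc (ι.f a) (ι.f b)) := by
  rw [Qc_def, Qc_def]
  refine annRel_trans (ι.f_circ _ _) (annRel_circ ?_ (f_cinv' ι b))
  refine annRel_trans (ι.f_circ _ _) (annRel_circ ?_ (f_cinv' ι a))
  exact ι.f_circ a b

/-- The key identity: `g` maps ∘-commutators to ∘-commutators of `f`-values. -/
lemma g_Qc (a b : A) : ι.g (Qc a b) = Qc (ι.f a) (ι.f b) := by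
  have hu : circ a b * (circ b a)⁻¹ ∈ braceCommutator A := circ_comm_inv_mem a b
  have ht : lam (Qc a b) (circ b a) * (circ b a)⁻¹ ∈ braceCommutator A :=
    thetaStar_mem _ _
  -- step 1: split by U2
  have step1 : ι.g (Qc a b)
      = ι.g (circ a b * (circ b a)⁻¹)
        * (ι.g (lam (Qc a b) (circ b a) * (circ b a)⁻¹))⁻¹ := by
    conv_lhs => rw [Qc_eq a b]
    rw [ι.g_mul _ hu _ (inv_mem ht), g_inv' ι ht]
  -- step 2: the θ* factor
  have step2 : ι.g (lam (Qc a b) (circ b a) * (circ b a)⁻¹)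
      = lam (Qc (ι.f a) (ι.f b)) (circ (ι.f b) (ι.f a))
        * (circ (ι.f b) (ι.f a))⁻¹ := by
    rw [ι.compat_thetaStar (Qc a b) (circ b a)]
    exact thetaStar_congr (f_Qc ι a b) (ι.f_circ b a)
  -- step 3: the (a∘b)(b∘a)⁻¹ factor
  have step3 : ι.g (circ a b * (circ b a)⁻¹)
      = circ (ι.f a) (ι.f b) * (circ (ι.f b) (ι.f a))⁻¹ := by
    have hP1 : a * (lam a b * b⁻¹) * a⁻¹ ∈ braceCommutator A :=
      conj_mem' (thetaStar_mem a b) a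
    have hP2 : a * b * a⁻¹ * b⁻¹ ∈ braceCommutator A := theta_mem a b
    have hP3 : b * (lam b a * a⁻¹)⁻¹ * b⁻¹ ∈ braceCommutator A :=
      conj_mem' (inv_mem (thetaStar_mem b a)) b
    have hgP1 : ι.g (a * (lam a b * b⁻¹) * a⁻¹)
        = ι.f a * (lam (ι.f a) (ι.f b) * (ι.f b)⁻¹) * (ι.f a)⁻¹ := by
      rw [conj_eq_theta a (lam a b * b⁻¹)]
      rw [ι.g_mul _ (theta_mem a _) _ (thetaStar_mem a b)]
      rw [ι.compat_theta a (lam a b * b⁻¹), ι.compat_thetaStar a b]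
      rw [theta_congr (annRel_refl (ι.f a)) (f_thetaStar ι a b)]
      rw [← conj_eq_theta (ι.f a) (lam (ι.f a) (ι.f b) * (ι.f b)⁻¹)]
    have hgP3 : ι.g (b * (lam b a * a⁻¹)⁻¹ * b⁻¹)
        = ι.f b * (lam (ι.f b) (ι.f a) * (ι.f a)⁻¹)⁻¹ * (ι.f b)⁻¹ := by
      rw [conj_eq_theta b (lam b a * a⁻¹)⁻¹]
      rw [ι.g_mul _ (theta_mem b _) _ (inv_mem (thetaStar_mem b a))]
      rw [g_inv' ι (thetaStar_mem b a), ι.compat_theta b ((lam b a * a⁻¹)⁻¹),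
        ι.compat_thetaStar b a]
      have hft : AnnRel B (ι.f ((lam b a * a⁻¹)⁻¹))
          ((lam (ι.f b) (ι.f a) * (ι.f a)⁻¹)⁻¹) :=
        annRel_trans (f_inv' ι _) (annRel_inv (f_thetaStar ι b a))
      rw [theta_congr (annRel_refl (ι.f b)) hft]
      rw [← conj_eq_theta (ι.f b) ((lam (ι.f b) (ι.f a) * (ι.f a)⁻¹)⁻¹)]
    calc ι.g (circ a b * (circ b a)⁻¹)
        = ι.g ((a * (lam a b * b⁻¹) * a⁻¹) * (a * b * a⁻¹ * b⁻¹)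
            * (b * (lam b a * a⁻¹)⁻¹ * b⁻¹)) := by rw [← U1]
      _ = ι.g ((a * (lam a b * b⁻¹) * a⁻¹) * (a * b * a⁻¹ * b⁻¹))
            * ι.g (b * (lam b a * a⁻¹)⁻¹ * b⁻¹) := by
          rw [ι.g_mul _ (mul_mem hP1 hP2) _ hP3]
      _ = ι.g (a * (lam a b * b⁻¹) * a⁻¹) * ι.g (a * b * a⁻¹ * b⁻¹)
            * ι.g (b * (lam b a * a⁻¹)⁻¹ * b⁻¹) := by
          rw [ι.g_mul _ hP1 _ hP2]
      _ = (ι.f a * (lam (ι.f a) (ι.f b) * (ι.f b)⁻¹) * (ι.f a)⁻¹)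
            * (ι.f a * ι.f b * (ι.f a)⁻¹ * (ι.f b)⁻¹)
            * (ι.f b * (lam (ι.f b) (ι.f a) * (ι.f a)⁻¹)⁻¹ * (ι.f b)⁻¹) := by
          rw [hgP1, ι.compat_theta a b, hgP3]
      _ = circ (ι.f a) (ι.f b) * (circ (ι.f b) (ι.f a))⁻¹ := (U1 _ _).symm
  rw [step1, step2, step3, ← Qc_eq (ι.f a) (ι.f b)]

end IsoProof
namespace IsoProof
open SkewLeftBrace Subgroup

variable {A B : Type*} [SkewLeftBrace A] [SkewLeftBrace B]
variable (ι : SkewBraceIsoclinism A B)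

/-- Elements of the ∘-commutator subgroup that `g` sends into the ∘-commutator of `B`. -/
def Tsub : Subgroup (Circ A) where
  carrier := {y | (ofCirc y : A) ∈ braceCommutator A ∧
    (toCirc (ι.g (ofCirc y)) : Circ B) ∈ commutator (Circ B)}
  one_mem' := ⟨one_mem _, by
    show (toCirc (ι.g (1 : A)) : Circ B) ∈ commutator (Circ B)
    rw [g_one]; exact one_mem _⟩
  mul_mem' := by
    rintro x y ⟨hx1, hx2⟩ ⟨hy1, hy2⟩
    refine ⟨circ_mem' hx1 hy1, ?_⟩
    show (toCirc (ι.g (circ (ofCirc x) (ofCirc y))) : Circ B) ∈ commutator (Circ B)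
    rw [ι.g_circ _ hx1 _ hy1]
    exact mul_mem hx2 hy2
  inv_mem' := by
    rintro x ⟨hx1, hx2⟩
    refine ⟨cinv_mem' hx1, ?_⟩
    show (toCirc (ι.g (cinv (ofCirc x))) : Circ B) ∈ commutator (Circ B)
    rw [g_cinv' ι hx1]
    exact inv_mem hx2

lemma commCirc_le_T : commutator (Circ A) ≤ Tsub ι := by
  rw [commutator_def, Subgroup.commutator_le]
  intro u _ v _
  refine ⟨Qc_mem (ofCirc u) (ofCirc v), ?_⟩
  show (toCirc (ι.g (Qc (ofCirc u) (ofCirc v))) : Circ B) ∈ commutator (Circ B)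
  rw [g_Qc]
  exact Qc_mem_circComm _ _

/-- `g` maps the ∘-commutator subgroup of `A` into that of `B`. -/
lemma g_circComm {y : Circ A} (hy : y ∈ commutator (Circ A)) :
    (toCirc (ι.g (ofCirc y)) : Circ B) ∈ commutator (Circ B) :=
  (commCirc_le_T ι hy).2

/-- Elements of `Circ B` hit by `g` from the ∘-commutator subgroup of `A`. -/
def Tsub' : Subgroup (Circ B) where
  carrier := {v | ∃ y : Circ A, y ∈ commutator (Circ A) ∧ ι.g (ofCirc y) = ofCirc v}
  one_mem' := ⟨1, one_mem _, g_one ι⟩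
  mul_mem' := by
    rintro v w ⟨y, hy, hgy⟩ ⟨z, hz, hgz⟩
    refine ⟨y * z, mul_mem hy hz, ?_⟩
    show ι.g (circ (ofCirc y) (ofCirc z)) = circ (ofCirc v) (ofCirc w)
    rw [ι.g_circ _ (circCommutator_subset hy) _ (circCommutator_subset hz), hgy, hgz]
  inv_mem' := by
    rintro v ⟨y, hy, hgy⟩
    refine ⟨y⁻¹, inv_mem hy, ?_⟩
    show ι.g (cinv (ofCirc y)) = cinv (ofCirc v)
    rw [g_cinv' ι (circCommutator_subset hy), hgy]

lemma commCircB_le_T' : commutator (Circ B) ≤ Tsub' ι := by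
  rw [commutator_def, Subgroup.commutator_le]
  intro u _ v _
  obtain ⟨a, ha⟩ := ι.f_surj (ofCirc u)
  obtain ⟨b, hb⟩ := ι.f_surj (ofCirc v)
  refine ⟨⁅toCirc a, toCirc b⁆, commutator_mem_commutator (mem_top _) (mem_top _), ?_⟩
  show ι.g (Qc a b) = ofCirc ⁅u, v⁆
  rw [g_Qc ι a b, Qc_congr ha hb]
  rfl

lemma g_lamOp {d n : A} (hd : d ∈ braceCommutator A) (hn : n ∈ braceCommutator A) :
    ι.g (lamOp d n) = lamOp (ι.g d) (ι.g n) := by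
  unfold lamOp
  rw [ι.g_mul _ (circ_mem' hd hn) _ (inv_mem hd), g_inv' ι hd, ι.g_circ _ hd _ hn]

/-- The homomorphism `Scomm A →* Scomm B` induced by `g`. -/
def phi : Scomm A →* Scomm B where
  toFun x := ⟨⟨ι.g x.1.left, toCirc (ι.g (ofCirc x.1.right))⟩,
    ι.g_maps _ x.2.1, g_circComm ι x.2.2⟩
  map_one' := by
    apply Subtype.ext
    apply SemidirectProduct.ext
    · show ι.g (1 : A) = 1
      exact g_one ι
    · show (toCirc (ι.g (1 : A)) : Circ B) = 1
      rw [g_one]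
      rfl
  map_mul' x y := by
    have hxl := x.2.1
    have hyl := y.2.1
    have hxr := circCommutator_subset x.2.2
    have hyr := circCommutator_subset y.2.2
    apply Subtype.ext
    apply SemidirectProduct.ext
    · show ι.g (x.1.left * (lamOpHom x.1.right) y.1.left)
        = ι.g x.1.left * (lamOpHom (toCirc (ι.g (ofCirc x.1.right)))) (ι.g y.1.left)
      rw [lamOpHom_apply, lamOpHom_apply,
        ι.g_mul _ hxl _ (lamOp_mem' hyl _), g_lamOp ι hxr hyl]
      rfl
    · show (toCirc (ι.g (circ (ofCirc x.1.right) (ofCirc y.1.right))) : Circ B)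
        = toCirc (circ (ι.g (ofCirc x.1.right)) (ι.g (ofCirc y.1.right)))
      rw [ι.g_circ _ hxr _ hyr]

lemma phi_bijective : Function.Bijective (phi ι) := by
  constructor
  · intro x y hxy
    have h1 : ι.g x.1.left = ι.g y.1.left :=
      congrArg (fun t : ↥(Scomm B) => t.1.left) hxy
    have h2 : ι.g (ofCirc x.1.right) = ι.g (ofCirc y.1.right) :=
      congrArg (fun t : ↥(Scomm B) => (ofCirc t.1.right : B)) hxy
    apply Subtype.ext
    apply SemidirectProduct.ext
    · exact ι.g_bij.injOn x.2.1 y.2.1 h1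
    · exact ι.g_bij.injOn (circCommutator_subset x.2.2)
        (circCommutator_subset y.2.2) h2
  · rintro ⟨w, hw1, hw2⟩
    obtain ⟨x, hx, hgx⟩ := ι.g_bij.surjOn hw1
    obtain ⟨y, hy, hgy⟩ := commCircB_le_T' ι hw2
    refine ⟨⟨⟨x, y⟩, hx, hy⟩, ?_⟩
    apply Subtype.ext
    apply SemidirectProduct.ext
    · exact hgx
    · exact hgy

end IsoProof

open IsoProof in
theorem isoclinic_commutator_lambdaOp_iso' (A B : Type*)
    [SkewLeftBrace A] [SkewLeftBrace B] (h : Nonempty (SkewBraceIsoclinism A B)) :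
    Nonempty (↥(commutator (LambdaOp A)) ≃* ↥(commutator (LambdaOp B))) := by
  obtain ⟨ι⟩ := h
  refine ⟨?_⟩
  have e1 : commutator (LambdaOp A) ≃* Scomm A :=
    MulEquiv.subgroupCongr commutator_lambdaOp_eq
  have e3 : Scomm B ≃* commutator (LambdaOp B) :=
    MulEquiv.subgroupCongr commutator_lambdaOp_eq.symm
  have e2 : Scomm A ≃* Scomm B := MulEquiv.ofBijective (phi ι) (phi_bijective ι)
  exact (e1.trans e2).trans e3

/-- if `A` and `B` are isoclinic skew left braces, then the
commutator subgroups of `Λ_{Aᵒᵖ}` and `Λ_{Bᵒᵖ}` are isomorphic groups. -/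
theorem isoclinic_commutator_lambdaOp_iso (A B : Type*)
    [SkewLeftBrace A] [SkewLeftBrace B] (h : Nonempty (SkewBraceIsoclinism A B)) :
    Nonempty (↥(commutator (LambdaOp A)) ≃* ↥(commutator (LambdaOp B))) := by
  exact isoclinic_commutator_lambdaOp_iso' A B h
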